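/- With P(v,j) as above, if G contains a Hamiltonian path π = (v_1 = s, ..., v_n = e) and the process performs the transitions (v_k → v_{k+1}) at slack k-1 in order k = 1, ..., n-1, then at the end π ∈ P(e, n-1). -/
import Mathlib


/-- If `G` contains a Hamiltonian path `π = (v 1 = s, ..., v n = e)`
and the process performs the transitions `v k → v (k+1)` at slack `k - 1` in
order, then at the end `π ∈ P e (n - 1)`. -/
theorem stmt14 {V : Type*} [Fintype V]
    (E : V → V → Prop) (s e : V) (n : ℕ) (hpos : 1 ≤ n)
    (hn : Fintype.card V = n)
    (v : ℕ → V) (hs : v 1 = s) (he : v n = e)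
    (hinj : ∀ i j, 1 ≤ i → i ≤ n → 1 ≤ j → j ≤ n → v i = v j → i = j)
    (hsurj : ∀ x : V, ∃ k, 1 ≤ k ∧ k ≤ n ∧ v k = x)
    (hedge : ∀ k, 1 ≤ k → k < n → E (v k) (v (k + 1)))
    (P : V → ℕ → Set (List V))
    (hbase : [s] ∈ P s 0)
    (hstep : ∀ k, 1 ≤ k → k < n → ∀ h ∈ P (v k) (k - 1),
      v (k + 1) ∉ h → h ++ [v (k + 1)] ∈ P (v (k + 1)) k) :
    ((List.range n).map (fun i => v (i + 1))) ∈ P e (n - 1) := by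
  have key : ∀ k, 1 ≤ k → k ≤ n →
      ((List.range k).map (fun i => v (i + 1))) ∈ P (v k) (k - 1) := by
    intro k
    induction k with
    | zero => intro h; omega
    | succ k ih =>
      intro _ hkn
      rcases Nat.eq_zero_or_pos k with hk0 | hk1
      · subst hk0
        simpa [List.range_succ, hs] using hbase
      · have hkltn : k < n := hkn
        have ihk := ih hk1 (le_of_lt hkltn)
        have hnotmem : v (k + 1) ∉ (List.range k).map (fun i => v (i + 1)) := by
          intro hmem
          rcases List.mem_map.mp hmem with ⟨i, hi, hvi⟩
          have hilt : i < k := List.mem_range.mp hi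
          have := hinj (i + 1) (k + 1) (by omega) (by omega) (by omega) (by omega) hvi
          omega
        have := hstep k hk1 hkltn _ ihk hnotmem
        simpa [List.range_succ, Nat.add_sub_cancel] using this
  have := key n hpos le_rfl
  rwa [he] at this
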